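/- Let σ > 0, l > 0, ξ ∈ ℝ, k ∈ ℤ, and p ∈ ℕ. Define a₂ = ξ − 2·i·k·π·σ²/l ∈ ℂ, z : ℝ → ℂ by z(u) = (√2/σ)·(u − a₂), and η : ℝ → ℂ by η(u) = exp(−z(u)²/4)·He_p(z(u)) (He_p evaluated at the complex argument z(u)). Then η is twice differentiable and, for all real u, (σ²/2)·η″(u) + (−(2·π·i·k·u)/l − ((u−ξ)² − σ²)/(2σ²))·η(u) = α·η(u), where α = −p − 2π²k²σ²/l² − 2πikξ/l. That is, η is an eigenfunction of the local linearized operator L^k_{loc,1} with eigenvalue α_{k,p} = −p − 2π²k²σ²/l² − 2πikξ/l. -/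

import Mathlib

open Polynomial Complex

private lemma hermite_deriv_succ' : ∀ n : ℕ, derivative (hermite (n+1)) = ((n:ℤ[X]) + 1) * hermite n := by
  intro n
  induction n with
  | zero => simp [hermite_one]
  | succ n ih =>
    have hd : derivative (hermite n) = X * hermite n - hermite (n+1) := by
      rw [hermite_succ]; ring
    rw [hermite_succ (n+1), derivative_sub, derivative_mul, derivative_X, ih, derivative_mul, hd]
    simp only [derivative_add, derivative_natCast, derivative_one]
    push_cast
    ring

private lemma hermite_ode' (p : ℕ) :
    derivative (derivative (hermite p)) = X * derivative (hermite p) - (p : ℤ[X]) * hermite p := by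
  cases p with
  | zero => simp
  | succ n =>
    have hd : derivative (hermite n) = X * hermite n - hermite (n+1) := by
      rw [hermite_succ]; ring
    rw [hermite_deriv_succ' n, derivative_mul, hd]
    simp only [derivative_add, derivative_natCast, derivative_one]
    push_cast
    ring

private lemma gauss_hermite_hasDerivAt (c a₂ : ℂ) (s : ℂ[X]) (w : ℂ) :
    HasDerivAt (fun v : ℂ => Complex.exp (-(c * (v - a₂)) ^ 2 / 4) * s.eval (c * (v - a₂)))
      (Complex.exp (-(c * (w - a₂)) ^ 2 / 4) *
        ((C c * (derivative s - C (1/2 : ℂ) * (X * s))).eval (c * (w - a₂)))) w := by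
  have hZ : HasDerivAt (fun v : ℂ => c * (v - a₂)) c w := by
    simpa using ((hasDerivAt_id w).sub_const a₂).const_mul c
  set W := c * (w - a₂) with hW
  have h1 : HasDerivAt (fun v : ℂ => -v ^ 2 / 4) (-W / 2) W := by
    have : HasDerivAt (fun v : ℂ => -v ^ 2 / 4) (-(((2:ℕ):ℂ) * W ^ 1) / 4) W := ((hasDerivAt_pow 2 W).neg).div_const 4
    convert this using 1
    ring
  have hexp : HasDerivAt (fun v : ℂ => Complex.exp (-v ^ 2 / 4))
      (Complex.exp (-W ^ 2 / 4) * (-W / 2)) W := h1.cexp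
  have hmul := hexp.mul (s.hasDerivAt W)
  have hcomp := hmul.comp w hZ
  have : ((fun v : ℂ => Complex.exp (-v ^ 2 / 4)) * fun v : ℂ => s.eval v) ∘ (fun v : ℂ => c * (v - a₂))
      = fun v : ℂ => Complex.exp (-(c * (v - a₂)) ^ 2 / 4) * s.eval (c * (v - a₂)) := rfl
  rw [this] at hcomp
  refine hcomp.congr_deriv ?_
  simp only [eval_mul, eval_C, eval_sub, eval_X, derivative_mul, derivative_C]
  ring

/-- eigenfunctions of the local linearized operator `L^k_{loc,1}` of the
kinetic Czirók model. With `a₂ = ξ − 2ikπσ²/l`, `z(u) = (√2/σ)(u − a₂)` and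
`η(u) = exp(−z(u)²/4)·He_p(z(u))`, the function `η` is twice differentiable and
satisfies `(σ²/2)·η″(u) + (−2πiku/l − ((u−ξ)² − σ²)/(2σ²))·η(u) = α_{k,p}·η(u)` with
`α_{k,p} = −p − 2π²k²σ²/l² − 2πikξ/l`. -/
theorem czirok_local_operator_eigenfunction (σ l ξ : ℝ) (hσ : 0 < σ) (hl : 0 < l)
    (k : ℤ) (p : ℕ)
    (a₂ : ℂ) (ha₂ : a₂ = (ξ : ℂ) - 2 * Complex.I * (k : ℂ) * (Real.pi : ℂ) * (σ : ℂ) ^ 2 / (l : ℂ))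
    (z : ℝ → ℂ) (hz : ∀ u : ℝ, z u = ((Real.sqrt 2 : ℂ) / (σ : ℂ)) * ((u : ℂ) - a₂))
    (η : ℝ → ℂ) (hη : ∀ u : ℝ, η u = Complex.exp (-(z u) ^ 2 / 4) * aeval (z u) (hermite p))
    (α : ℂ) (hα : α = -(p : ℂ) - 2 * (Real.pi : ℂ) ^ 2 * (k : ℂ) ^ 2 * (σ : ℂ) ^ 2 / (l : ℂ) ^ 2
      - 2 * (Real.pi : ℂ) * Complex.I * (k : ℂ) * (ξ : ℂ) / (l : ℂ)) :
    Differentiable ℝ η ∧ Differentiable ℝ (deriv η) ∧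
    ∀ u : ℝ,
      ((σ : ℂ) ^ 2 / 2) * deriv (deriv η) u +
        (-(2 * (Real.pi : ℂ) * Complex.I * (k : ℂ) * (u : ℂ)) / (l : ℂ) -
          (((u : ℂ) - (ξ : ℂ)) ^ 2 - (σ : ℂ) ^ 2) / (2 * (σ : ℂ) ^ 2)) * η u =
      α * η u := by
  have hσ0 : (σ : ℂ) ≠ 0 := by exact_mod_cast hσ.ne'
  have hl0 : (l : ℂ) ≠ 0 := by exact_mod_cast hl.ne'
  set c : ℂ := (Real.sqrt 2 : ℂ) / (σ : ℂ) with hc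
  set q : ℂ[X] := (hermite p).map (algebraMap ℤ ℂ) with hqdef
  set r1 : ℂ[X] := C c * (derivative q - C (1/2 : ℂ) * (X * q)) with hr1
  set r2 : ℂ[X] := C c * (derivative r1 - C (1/2 : ℂ) * (X * r1)) with hr2
  have hηeq : η = fun u : ℝ =>
      Complex.exp (-(c * ((u : ℂ) - a₂)) ^ 2 / 4) * q.eval (c * ((u : ℂ) - a₂)) := by
    funext u
    rw [hη, hz]
    congr 1
    rw [hqdef, eval_map]
    rw [aeval_def]
  have hD1 : ∀ u : ℝ, HasDerivAt η
      (Complex.exp (-(c * ((u : ℂ) - a₂)) ^ 2 / 4) * r1.eval (c * ((u : ℂ) - a₂))) u := by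
    intro u
    rw [hηeq, hr1]
    exact (gauss_hermite_hasDerivAt c a₂ q (u : ℂ)).comp_ofReal
  have hd1 : deriv η = fun u : ℝ =>
      Complex.exp (-(c * ((u : ℂ) - a₂)) ^ 2 / 4) * r1.eval (c * ((u : ℂ) - a₂)) :=
    funext fun u => (hD1 u).deriv
  have hD2 : ∀ u : ℝ, HasDerivAt (deriv η)
      (Complex.exp (-(c * ((u : ℂ) - a₂)) ^ 2 / 4) * r2.eval (c * ((u : ℂ) - a₂))) u := by
    intro u
    rw [hd1, hr2]
    exact (gauss_hermite_hasDerivAt c a₂ r1 (u : ℂ)).comp_ofReal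
  refine ⟨fun u => (hD1 u).differentiableAt, fun u => (hD2 u).differentiableAt, ?_⟩
  intro u
  rw [(hD2 u).deriv]
  simp only [hηeq]
  -- the Hermite ODE, mapped to ℂ[X]
  have hode : derivative (derivative q) = X * derivative q - (p : ℂ[X]) * q := by
    have := congrArg (Polynomial.map (algebraMap ℤ ℂ)) (hermite_ode' p)
    simpa only [Polynomial.map_sub, Polynomial.map_mul, Polynomial.map_X,
      Polynomial.derivative_map, Polynomial.map_natCast, hqdef] using this
  -- the scalar eigenvalue identity
  have Rσ : (σ:ℂ)^2 * ((σ:ℂ)^2)⁻¹ = 1 := mul_inv_cancel₀ (pow_ne_zero 2 hσ0)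
  have hx : c^2 = 2 * ((σ:ℂ)^2)⁻¹ := by
    rw [hc, div_pow, show ((Real.sqrt 2:ℝ):ℂ)^2 = 2 by
      rw [← Complex.ofReal_pow, Real.sq_sqrt (by norm_num : (2:ℝ) ≥ 0)]; norm_num,
      div_eq_mul_inv]
  have step1 : (σ:ℂ)^2/2 * (c^2 * ((c * ((u:ℂ) - a₂))^2/4 - 1/2 - (p:ℂ)))
      = ((u:ℂ) - a₂)^2 * ((σ:ℂ)^2)⁻¹ / 2 - 1/2 - (p:ℂ) := by
    rw [mul_pow, hx]
    linear_combination (((u:ℂ) - a₂)^2 * ((σ:ℂ)^2)⁻¹ / 2 - 1/2 - (p:ℂ)) * Rσ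
  have key2 : ((u:ℂ) - a₂)^2 * ((σ:ℂ)^2)⁻¹ / 2 - 1/2 - (p:ℂ) +
      (-(2 * (Real.pi : ℂ) * Complex.I * (k : ℂ) * (u : ℂ)) / (l : ℂ) -
          (((u : ℂ) - (ξ : ℂ)) ^ 2 - (σ : ℂ) ^ 2) / (2 * (σ : ℂ) ^ 2)) = α := by
    rw [ha₂, hα]
    linear_combination
      (2*(Real.pi:ℂ)*Complex.I*(k:ℂ)*((u:ℂ)-(ξ:ℂ))*(l:ℂ)⁻¹ + 1/2
        - 2*(k:ℂ)^2*(Real.pi:ℂ)^2*((l:ℂ)⁻¹)^2*(σ:ℂ)^2) * Rσ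
      + (2*(k:ℂ)^2*(Real.pi:ℂ)^2*((l:ℂ)⁻¹)^2*(σ:ℂ)^4*((σ:ℂ)^2)⁻¹) * Complex.I_sq
  have key : (σ:ℂ)^2/2 * (c^2 * ((c * ((u:ℂ) - a₂))^2/4 - 1/2 - (p:ℂ))) +
      (-(2 * (Real.pi : ℂ) * Complex.I * (k : ℂ) * (u : ℂ)) / (l : ℂ) -
          (((u : ℂ) - (ξ : ℂ)) ^ 2 - (σ : ℂ) ^ 2) / (2 * (σ : ℂ) ^ 2)) = α := by
    linear_combination step1 + key2
  -- expand the polynomial coefficients and conclude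
  simp only [hr2, hr1, hode, derivative_mul, derivative_sub, derivative_C, derivative_X,
    eval_mul, eval_sub, eval_add, eval_C, eval_X, eval_natCast, zero_mul, zero_add, zero_sub,
    one_mul, mul_zero, add_zero, sub_zero]
  linear_combination
    (Complex.exp (-(c * ((u:ℂ) - a₂)) ^ 2 / 4) * q.eval (c * ((u:ℂ) - a₂))) * key
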